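/- For a set S, the poset of strongly connected components of the S-indexed product category Set^S is isomorphic to the power set of S ordered by inclusion. Consequently, Set^S satisfies the ascending chain condition on strongly connected components if and only if S is finite. -/

import Mathlib

open CategoryTheory

universe v u v' u'

/-- Two objects are strongly connected if there are morphisms in both directions. -/
def StronglyConnected {C : Type u} [Category.{v} C] (X Y : C) : Prop :=
  Nonempty (X ⟶ Y) ∧ Nonempty (Y ⟶ X)

/-- Strong connectedness is an equivalence relation on objects. -/
def sccSetoid (C : Type u) [Category.{v} C] : Setoid C where
  r := StronglyConnected
  iseqv := by
    refine ⟨fun X => ⟨⟨𝟙 X⟩, ⟨𝟙 X⟩⟩, fun h => ⟨h.2, h.1⟩, fun h h' => ?_⟩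
    exact ⟨⟨h.1.some ≫ h'.1.some⟩, ⟨h'.2.some ≫ h.2.some⟩⟩

/-- The strongly connected components of a category. -/
def SCC (C : Type u) [Category.{v} C] : Type u := Quotient (sccSetoid C)

/-- The class of an object in the poset of strongly connected components. -/
def SCC.mk {C : Type u} [Category.{v} C] (X : C) : SCC C := Quotient.mk (sccSetoid C) X

instance (C : Type u) [Category.{v} C] : PartialOrder (SCC C) where
  le := Quotient.lift₂ (fun X Y => Nonempty (X ⟶ Y)) (by
    rintro X Y X' Y' ⟨⟨xx'⟩, ⟨x'x⟩⟩ ⟨⟨yy'⟩, ⟨y'y⟩⟩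
    exact propext ⟨fun ⟨f⟩ => ⟨x'x ≫ f ≫ yy'⟩, fun ⟨f⟩ => ⟨xx' ≫ f ≫ y'y⟩⟩)
  le_refl := by rintro ⟨X⟩; exact ⟨𝟙 X⟩
  le_trans := by rintro ⟨X⟩ ⟨Y⟩ ⟨Z⟩ ⟨f⟩ ⟨g⟩; exact ⟨f ≫ g⟩
  le_antisymm := by rintro ⟨X⟩ ⟨Y⟩ ⟨f⟩ ⟨g⟩; exact Quotient.sound ⟨⟨f⟩, ⟨g⟩⟩

/-- The map induced on strongly connected components by a functor. -/
def sccMap {C : Type u} [Category.{v} C] {D : Type u'} [Category.{v'} D] (F : C ⥤ D) :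
    SCC C → SCC D :=
  Quotient.map' F.obj (by
    rintro X Y ⟨⟨f⟩, ⟨g⟩⟩
    exact ⟨⟨F.map f⟩, ⟨F.map g⟩⟩)

section aux

variable {S : Type}

/-- Support of a family of types. -/
def sccSupp (F : S → Type) : Set S := {s | Nonempty (F s)}

lemma scc_hom_iff (F G : S → Type) :
    Nonempty (F ⟶ G) ↔ sccSupp F ⊆ sccSupp G := by
  constructor
  · rintro ⟨f⟩ s ⟨x⟩
    exact ⟨f s x⟩
  · intro h
    exact ⟨fun s => TypeCat.ofHom fun x => (h ⟨x⟩).some⟩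

lemma scc_le_iff (F G : S → Type) :
    SCC.mk F ≤ SCC.mk G ↔ sccSupp F ⊆ sccSupp G := scc_hom_iff F G

/-- The order isomorphism between SCC of `S → Type` and `Set S`. -/
noncomputable def sccOrderIso (S : Type) : SCC (S → Type) ≃o Set S where
  toFun := Quotient.lift sccSupp (by
    rintro F G ⟨hf, hg⟩
    exact le_antisymm ((scc_hom_iff F G).1 hf) ((scc_hom_iff G F).1 hg))
  invFun := fun A => SCC.mk (fun s => PLift (s ∈ A))
  left_inv := by
    rintro ⟨F⟩
    refine Quotient.sound ⟨⟨fun s => TypeCat.ofHom fun p => p.down.some⟩, ⟨fun s => TypeCat.ofHom fun x => ⟨⟨x⟩⟩⟩⟩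
  right_inv := by
    intro A
    ext s
    exact ⟨fun ⟨p⟩ => p.down, fun h => ⟨⟨h⟩⟩⟩
  map_rel_iff' := by
    rintro ⟨F⟩ ⟨G⟩
    exact (scc_le_iff F G).symm

lemma strictMono_set_of_infinite (S : Type) [Infinite S] :
    ∃ f : ℕ → Set S, StrictMono f := by
  let g := Infinite.natEmbedding S
  refine ⟨fun n => g '' {k | k < n}, fun n m hnm => ?_⟩
  constructor
  · exact Set.image_mono (fun k hk => lt_trans hk hnm)
  · intro h
    obtain ⟨k, hk, hkn⟩ := h ⟨n, hnm, rfl⟩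
    exact absurd (g.injective hkn ▸ hk) (lt_irrefl n)

end aux

/-- For a set `S`, the poset of strongly connected components of `Set^S` is
isomorphic to the power set of `S`; consequently `Set^S` satisfies the
ascending chain condition iff `S` is finite. -/
theorem scc_pi_type (S : Type) :
    Nonempty (SCC (S → Type) ≃o Set S) ∧
    ((¬ ∃ f : ℕ → SCC (S → Type), StrictMono f) ↔ Finite S) := by
  refine ⟨⟨sccOrderIso S⟩, ?_, ?_⟩
  · intro h
    by_contra hfin
    rw [not_finite_iff_infinite] at hfin
    obtain ⟨f, hf⟩ := strictMono_set_of_infinite S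
    exact h ⟨fun n => (sccOrderIso S).symm (f n), (sccOrderIso S).symm.strictMono.comp hf⟩
  · intro hfin ⟨f, hf⟩
    have : Finite (SCC (S → Type)) := Finite.of_equiv (Set S) (sccOrderIso S).symm.toEquiv
    exact absurd (Finite.of_injective f hf.injective) (not_finite_iff_infinite.mpr inferInstance)
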